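/- Let m be a positive integer, γ₁,…,γ_m ∈ [0,1], η > 0, c > 1, and let p ∈ [0,1] satisfy p ≥ 10c/(η²m). Let U ⊆ [m] be a random subset in which each i ∈ [m] is included independently with probability p. Define the empirical average to be (Σ_{i∈U} γ_i)/|U| if U ≠ ∅ and 1/2 if U = ∅. Then with probability at least 1 − e^{−c}, the empirical average lies within η of the true average (Σ_{i=1}^m γ_i)/m. -/

import Mathlib

open scoped Classical BigOperators

noncomputable section

/-- Probability that a `p`-sampled subset of `[m]` (each index included independently
with probability `p`) satisfies the event `E`. -/
def sampleProb (m : ℕ) (p : ℝ) (E : Finset (Fin m) → Prop) : ℝ :=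
  ∑ R ∈ Finset.univ.filter E, p ^ R.card * (1 - p) ^ (m - R.card)

lemma sum_weight_mul (m : ℕ) (p : ℝ) (g : Fin m → ℝ) :
    ∑ R : Finset (Fin m), p ^ R.card * (1 - p) ^ (m - R.card) * ∏ i ∈ R, g i
      = ∏ i : Fin m, (p * g i + (1 - p)) := by
  rw [Finset.prod_add, ← Finset.powerset_univ]
  refine Finset.sum_congr rfl fun R _ => ?_
  rw [Finset.prod_mul_distrib, Finset.prod_const, Finset.prod_const]
  have hcard : (Finset.univ \ R).card = m - R.card := by
    rw [← Finset.compl_eq_univ_sdiff, Finset.card_compl, Fintype.card_fin]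
  rw [hcard]
  ring

lemma weight_nonneg (m : ℕ) (p : ℝ) (hp0 : 0 ≤ p) (hp1 : p ≤ 1) (R : Finset (Fin m)) :
    (0:ℝ) ≤ p ^ R.card * (1 - p) ^ (m - R.card) :=
  mul_nonneg (pow_nonneg hp0 _) (pow_nonneg (by linarith) _)

lemma sampleProb_nonneg (m : ℕ) (p : ℝ) (hp0 : 0 ≤ p) (hp1 : p ≤ 1)
    (E : Finset (Fin m) → Prop) : 0 ≤ sampleProb m p E :=
  Finset.sum_nonneg fun R _ => weight_nonneg m p hp0 hp1 R

lemma sampleProb_total (m : ℕ) (p : ℝ) :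
    ∑ R : Finset (Fin m), p ^ R.card * (1 - p) ^ (m - R.card) = 1 := by
  have := sum_weight_mul m p fun _ => (1:ℝ)
  simpa using this

lemma sampleProb_compl (m : ℕ) (p : ℝ) (E : Finset (Fin m) → Prop) :
    sampleProb m p E + sampleProb m p (fun R => ¬ E R) = 1 := by
  unfold sampleProb
  rw [Finset.sum_filter_add_sum_filter_not]
  exact sampleProb_total m p

lemma sampleProb_mono (m : ℕ) (p : ℝ) (hp0 : 0 ≤ p) (hp1 : p ≤ 1)
    {E F : Finset (Fin m) → Prop} (h : ∀ R, E R → F R) :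
    sampleProb m p E ≤ sampleProb m p F := by
  unfold sampleProb
  refine Finset.sum_le_sum_of_subset_of_nonneg ?_ fun R _ _ => weight_nonneg m p hp0 hp1 R
  intro R hR
  simp only [Finset.mem_filter, Finset.mem_univ, true_and] at hR ⊢
  exact h R hR

lemma sampleProb_or_le (m : ℕ) (p : ℝ) (hp0 : 0 ≤ p) (hp1 : p ≤ 1)
    (E F : Finset (Fin m) → Prop) :
    sampleProb m p (fun R => E R ∨ F R) ≤ sampleProb m p E + sampleProb m p F := by
  unfold sampleProb
  rw [Finset.sum_filter, Finset.sum_filter, Finset.sum_filter, ← Finset.sum_add_distrib]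
  refine Finset.sum_le_sum fun R _ => ?_
  have hw := weight_nonneg m p hp0 hp1 R
  by_cases hE : E R <;> by_cases hF : F R <;> simp [hE, hF] <;> linarith

/-- Chernoff bound for the `p`-sampling distribution. -/
lemma chernoff (m : ℕ) (p : ℝ) (hp0 : 0 ≤ p) (hp1 : p ≤ 1)
    (f : Fin m → ℝ) (lam t : ℝ) (hlam : 0 ≤ lam) :
    sampleProb m p (fun R => t ≤ ∑ i ∈ R, f i)
      ≤ Real.exp (p * (∑ i, (Real.exp (lam * f i) - 1)) - lam * t) := by
  have step1 : sampleProb m p (fun R => t ≤ ∑ i ∈ R, f i)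
      ≤ ∑ R : Finset (Fin m),
          p ^ R.card * (1 - p) ^ (m - R.card) * Real.exp (lam * ((∑ i ∈ R, f i) - t)) := by
    refine le_trans (Finset.sum_le_sum fun R hR => ?_)
      (Finset.sum_le_sum_of_subset_of_nonneg (Finset.filter_subset _ _)
        (fun R _ _ => mul_nonneg (weight_nonneg m p hp0 hp1 R) (Real.exp_nonneg _)))
    have hRt : t ≤ ∑ i ∈ R, f i := (Finset.mem_filter.mp hR).2
    have h1 : (1:ℝ) ≤ Real.exp (lam * ((∑ i ∈ R, f i) - t)) :=
      Real.one_le_exp (mul_nonneg hlam (by linarith))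
    exact le_mul_of_one_le_right (weight_nonneg m p hp0 hp1 R) h1
  have step2 : ∑ R : Finset (Fin m),
        p ^ R.card * (1 - p) ^ (m - R.card) * Real.exp (lam * ((∑ i ∈ R, f i) - t))
      = (∏ i : Fin m, (p * Real.exp (lam * f i) + (1 - p))) * Real.exp (-(lam * t)) := by
    rw [← sum_weight_mul m p (fun i => Real.exp (lam * f i)), Finset.sum_mul]
    refine Finset.sum_congr rfl fun R _ => ?_
    have h1 : Real.exp (lam * ((∑ i ∈ R, f i) - t))
        = (∏ i ∈ R, Real.exp (lam * f i)) * Real.exp (-(lam * t)) := by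
      rw [← Real.exp_sum, ← Real.exp_add]
      congr 1
      rw [← Finset.mul_sum]
      ring
    rw [h1]
    ring
  have step3 : (∏ i : Fin m, (p * Real.exp (lam * f i) + (1 - p)))
      ≤ ∏ i : Fin m, Real.exp (p * (Real.exp (lam * f i) - 1)) := by
    refine Finset.prod_le_prod (fun i _ => ?_) (fun i _ => ?_)
    · have := Real.exp_nonneg (lam * f i); nlinarith
    · have h := Real.add_one_le_exp (p * (Real.exp (lam * f i) - 1))
      nlinarith
  have step4 : (∏ i : Fin m, Real.exp (p * (Real.exp (lam * f i) - 1)))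
      = Real.exp (p * ∑ i, (Real.exp (lam * f i) - 1)) := by
    rw [← Real.exp_sum, Finset.mul_sum]
  calc sampleProb m p (fun R => t ≤ ∑ i ∈ R, f i)
      ≤ ∑ R : Finset (Fin m),
          p ^ R.card * (1 - p) ^ (m - R.card) * Real.exp (lam * ((∑ i ∈ R, f i) - t)) := step1
    _ = (∏ i : Fin m, (p * Real.exp (lam * f i) + (1 - p))) * Real.exp (-(lam * t)) := step2
    _ ≤ (∏ i : Fin m, Real.exp (p * (Real.exp (lam * f i) - 1))) * Real.exp (-(lam * t)) := by
        exact mul_le_mul_of_nonneg_right step3 (Real.exp_nonneg _)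
    _ = Real.exp (p * (∑ i, (Real.exp (lam * f i) - 1)) - lam * t) := by
        rw [step4, ← Real.exp_add, sub_eq_add_neg]

lemma exp_quad_bound {x : ℝ} (hx : |x| ≤ 1) : Real.exp x ≤ 1 + x + 3/4 * x^2 := by
  have h := Real.exp_bound hx (n := 2) (by norm_num)
  have hs : ∑ i ∈ Finset.range 2, x ^ i / (i.factorial : ℝ) = 1 + x := by
    simp [Finset.sum_range_succ]
  rw [hs] at h
  have h2 := (abs_le.mp h).2
  have hsq : |x| ^ 2 = x ^ 2 := sq_abs x
  have hnum : ((2:ℕ).succ : ℝ) / ((2:ℕ).factorial * (2:ℕ)) = 3/4 := by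
    norm_num [Nat.factorial]
  rw [hsq, hnum] at h2
  linarith

set_option maxHeartbeats 4000000 in
theorem stmt2 (m : ℕ) (hm : 0 < m) (γ : Fin m → ℝ)
    (hγ : ∀ i, γ i ∈ Set.Icc (0:ℝ) 1)
    (η c p : ℝ) (hη : 0 < η) (hc : 1 < c) (hp0 : 0 ≤ p) (hp1 : p ≤ 1)
    (hp : 10 * c / (η^2 * m) ≤ p) :
    1 - Real.exp (-c) ≤ sampleProb m p (fun U =>
      |(if U = ∅ then 1/2 else (∑ i ∈ U, γ i) / (U.card : ℝ)) - (∑ i, γ i) / (m:ℝ)| ≤ η) := by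
  classical
  have hm' : (0:ℝ) < m := by exact_mod_cast hm
  set gbar : ℝ := (∑ i, γ i) / (m:ℝ) with hgbar_def
  have hsum0 : 0 ≤ ∑ i, γ i := Finset.sum_nonneg fun i _ => (hγ i).1
  have hsum1 : ∑ i, γ i ≤ m := by
    calc ∑ i, γ i ≤ ∑ _i : Fin m, (1:ℝ) := Finset.sum_le_sum fun i _ => (hγ i).2
      _ = m := by simp
  have hg0 : 0 ≤ gbar := div_nonneg hsum0 hm'.le
  have hg1 : gbar ≤ 1 := by rw [hgbar_def, div_le_one hm']; exact hsum1
  have hemp : ∀ U : Finset (Fin m),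
      (if U = ∅ then (1:ℝ)/2 else (∑ i ∈ U, γ i) / (U.card : ℝ)) ∈ Set.Icc (0:ℝ) 1 := by
    intro U
    by_cases hU : U = ∅
    · rw [if_pos hU]; constructor <;> norm_num
    · simp only [if_neg hU]
      have hcard : (0:ℝ) < U.card := by
        have : 0 < U.card := Finset.card_pos.mpr (Finset.nonempty_of_ne_empty hU)
        exact_mod_cast this
      constructor
      · exact div_nonneg (Finset.sum_nonneg fun i _ => (hγ i).1) hcard.le
      · rw [div_le_one hcard]
        calc ∑ i ∈ U, γ i ≤ ∑ _i ∈ U, (1:ℝ) := Finset.sum_le_sum fun i _ => (hγ i).2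
          _ = U.card := by simp
  by_cases hη1 : 1 ≤ η
  · -- trivial case: the event always holds
    have hE_all : ∀ U : Finset (Fin m),
        |(if U = ∅ then (1:ℝ)/2 else (∑ i ∈ U, γ i) / (U.card : ℝ)) - gbar| ≤ η := by
      intro U
      have h1 := hemp U
      rw [abs_le]
      constructor <;> [linarith [h1.1]; linarith [h1.2]]
    have hfilter : (Finset.univ.filter fun U : Finset (Fin m) =>
        |(if U = ∅ then (1:ℝ)/2 else (∑ i ∈ U, γ i) / (U.card : ℝ)) - gbar| ≤ η)
        = Finset.univ := Finset.filter_true_of_mem fun U _ => hE_all U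
    unfold sampleProb
    rw [hfilter, sampleProb_total m p]
    have := Real.exp_pos (-c)
    linarith
  -- main case
  push_neg at hη1
  have hc0 : (0:ℝ) < c := lt_trans one_pos hc
  have hη2 : (0:ℝ) < η ^ 2 := by positivity
  have hη2le1 : η ^ 2 ≤ 1 := by nlinarith
  set P : ℝ := p * m with hPdef
  have hP1 : 10 * c / η ^ 2 ≤ P := by
    have h1 : 10 * c / (η ^ 2 * m) * m ≤ p * m := mul_le_mul_of_nonneg_right hp hm'.le
    have h2 : 10 * c / (η ^ 2 * m) * m = 10 * c / η ^ 2 := by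
      field_simp
    rw [h2] at h1
    exact h1
  have hPη : 10 * c ≤ η ^ 2 * P := by
    have := (div_le_iff₀ hη2).mp hP1
    linarith
  have hP10c : 10 * c ≤ P := by nlinarith
  have hPpos : (0:ℝ) < P := by linarith
  set a : Fin m → ℝ := fun i => γ i - gbar with ha_def
  have ha_abs : ∀ i, |a i| ≤ 1 := by
    intro i
    show |γ i - gbar| ≤ 1
    rw [abs_le]
    exact ⟨by linarith [(hγ i).1, hg1], by linarith [(hγ i).2, hg0]⟩
  have hsg : ∑ i, γ i = m * gbar := by
    rw [hgbar_def]; field_simp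
  have ha_sum : ∑ i, a i = 0 := by
    simp only [ha_def, Finset.sum_sub_distrib, Finset.sum_const, Finset.card_univ,
      Fintype.card_fin, nsmul_eq_mul]
    rw [hsg]
    ring
  have ha_sq : ∑ i, (a i) ^ 2 ≤ m / 4 := by
    have h1 : ∀ i, (a i) ^ 2 ≤ γ i - 2 * gbar * γ i + gbar ^ 2 := by
      intro i
      show (γ i - gbar) ^ 2 ≤ _
      nlinarith [(hγ i).1, (hγ i).2]
    calc ∑ i, (a i) ^ 2 ≤ ∑ i, (γ i - 2 * gbar * γ i + gbar ^ 2) :=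
          Finset.sum_le_sum fun i _ => h1 i
      _ = (∑ i, γ i) - 2 * gbar * (∑ i, γ i) + m * gbar ^ 2 := by
          rw [Finset.sum_add_distrib, Finset.sum_sub_distrib, ← Finset.mul_sum]
          simp [Finset.card_univ]
      _ = m * (gbar - gbar ^ 2) := by rw [hsg]; ring
      _ ≤ m / 4 := by nlinarith [sq_nonneg (gbar - 1/2)]
  -- generic deviation bound
  have hdev : ∀ b : Fin m → ℝ, (∀ i, |b i| ≤ 1) → (∑ i, b i = 0) → (∑ i, (b i) ^ 2 ≤ m / 4) →
      sampleProb m p (fun R => η * P / 2 ≤ ∑ i ∈ R, b i) ≤ Real.exp (-(25/8 * c)) := by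
    intro b hb1 hb2 hb3
    have hch := chernoff m p hp0 hp1 b η (η * P / 2) hη.le
    refine le_trans hch (Real.exp_le_exp.mpr ?_)
    have hsum_le : ∑ i, (Real.exp (η * b i) - 1) ≤ 3/16 * (η ^ 2 * m) := by
      have h1 : ∀ i, Real.exp (η * b i) - 1 ≤ η * b i + 3/4 * (η * b i) ^ 2 := by
        intro i
        have hx : |η * b i| ≤ 1 := by
          rw [abs_mul, abs_of_pos hη]
          calc η * |b i| ≤ η * 1 := by nlinarith [hb1 i, abs_nonneg (b i)]
            _ ≤ 1 := by linarith
        have := exp_quad_bound hx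
        linarith
      calc ∑ i, (Real.exp (η * b i) - 1)
          ≤ ∑ i, (η * b i + 3/4 * (η * b i) ^ 2) := Finset.sum_le_sum fun i _ => h1 i
        _ = η * (∑ i, b i) + 3/4 * η ^ 2 * ∑ i, (b i) ^ 2 := by
            rw [Finset.sum_add_distrib, ← Finset.mul_sum]
            congr 1
            rw [Finset.mul_sum]
            exact Finset.sum_congr rfl fun i _ => by ring
        _ ≤ 3/16 * (η ^ 2 * m) := by
            rw [hb2]
            nlinarith [hη2]
    have hmul : p * (∑ i, (Real.exp (η * b i) - 1)) ≤ 3/16 * (η ^ 2 * P) := by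
      calc p * (∑ i, (Real.exp (η * b i) - 1)) ≤ p * (3/16 * (η ^ 2 * m)) :=
            mul_le_mul_of_nonneg_left hsum_le hp0
        _ = 3/16 * (η ^ 2 * P) := by rw [hPdef]; ring
    nlinarith [hPη]
  have hdev1 := hdev a ha_abs ha_sum ha_sq
  have hdev2 := hdev (fun i => -(a i)) (fun i => by rw [abs_neg]; exact ha_abs i)
    (by simp [ha_sum]) (by simpa using ha_sq)
  -- count bound
  have hcount : sampleProb m p (fun R => -(P/2) ≤ ∑ i ∈ R, (fun _ : Fin m => (-1:ℝ)) i)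
      ≤ Real.exp (-((5 - 5 * Real.log 2) * c)) := by
    have hch := chernoff m p hp0 hp1 (fun _ => (-1:ℝ)) (Real.log 2) (-(P/2))
      (Real.log_nonneg one_le_two)
    refine le_trans hch (Real.exp_le_exp.mpr ?_)
    have hval : Real.exp (Real.log 2 * (-1:ℝ)) = 1/2 := by
      rw [mul_neg_one, Real.exp_neg, Real.exp_log two_pos]
      norm_num
    have hsum : ∑ _i : Fin m, (Real.exp (Real.log 2 * (-1:ℝ)) - 1) = m * (-(1/2)) := by
      rw [hval]
      simp [Finset.card_univ]
      ring
    rw [hsum]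
    have hl2 : Real.log 2 < 0.7 := lt_trans Real.log_two_lt_d9 (by norm_num)
    have hl2' : 0 < Real.log 2 := Real.log_pos (by norm_num)
    have hPm : P = p * m := hPdef
    nlinarith [hP10c, hc0]
  -- decomposition of the bad event
  have key : ∀ R : Finset (Fin m),
      ¬ (|(if R = ∅ then (1:ℝ)/2 else (∑ i ∈ R, γ i) / (R.card : ℝ)) - gbar| ≤ η) →
      ((-(P/2) ≤ ∑ i ∈ R, (fun _ : Fin m => (-1:ℝ)) i) ∨
       ((η * P / 2 ≤ ∑ i ∈ R, a i) ∨ (η * P / 2 ≤ ∑ i ∈ R, (fun i => -(a i)) i))) := by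
    intro R hR
    by_contra hcon
    push_neg at hcon
    obtain ⟨h1, h2, h3⟩ := hcon
    apply hR
    have hcard : P/2 < (R.card : ℝ) := by
      have hs : ∑ _x ∈ R, (-1:ℝ) = -(R.card : ℝ) := by simp
      rw [hs] at h1
      linarith
    have hcard0 : (0:ℝ) < (R.card : ℝ) := by linarith [hPpos]
    have hne : R ≠ ∅ := by
      intro h
      rw [h] at hcard0
      simp at hcard0
    rw [if_neg hne]
    rw [Finset.sum_neg_distrib] at h3
    have habs : |∑ i ∈ R, a i| < η * P / 2 := by
      rw [abs_lt]
      exact ⟨by linarith, by linarith⟩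
    have heq : (∑ i ∈ R, γ i) / (R.card : ℝ) - gbar = (∑ i ∈ R, a i) / (R.card : ℝ) := by
      have : ∑ i ∈ R, a i = (∑ i ∈ R, γ i) - (R.card : ℝ) * gbar := by
        simp [ha_def, Finset.sum_sub_distrib, Finset.sum_const, nsmul_eq_mul]
      rw [this]
      rw [sub_div, mul_div_cancel_left₀ _ hcard0.ne']
    rw [heq, abs_div, abs_of_pos hcard0, div_le_iff₀ hcard0]
    nlinarith [habs, hcard, hη]
  -- combine
  have hbad : sampleProb m p (fun R =>
      ¬ (|(if R = ∅ then (1:ℝ)/2 else (∑ i ∈ R, γ i) / (R.card : ℝ)) - gbar| ≤ η))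
      ≤ Real.exp (-c) := by
    have hmono := sampleProb_mono m p hp0 hp1 key
    have hor1 := sampleProb_or_le m p hp0 hp1
      (fun R => -(P/2) ≤ ∑ i ∈ R, (fun _ : Fin m => (-1:ℝ)) i)
      (fun R => (η * P / 2 ≤ ∑ i ∈ R, a i) ∨ (η * P / 2 ≤ ∑ i ∈ R, (fun i => -(a i)) i))
    have hor2 := sampleProb_or_le m p hp0 hp1
      (fun R => η * P / 2 ≤ ∑ i ∈ R, a i)
      (fun R => η * P / 2 ≤ ∑ i ∈ R, (fun i => -(a i)) i)
    -- numeric combination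
    have hfin : Real.exp (-((5 - 5 * Real.log 2) * c)) + 2 * Real.exp (-(25/8 * c))
        ≤ Real.exp (-c) := by
      have he1 : (2.7:ℝ) < Real.exp 1 := lt_trans (by norm_num) Real.exp_one_gt_d9
      have hl2 : Real.log 2 < 0.7 := lt_trans Real.log_two_lt_d9 (by norm_num)
      have hl2' : 0 < Real.log 2 := Real.log_pos (by norm_num)
      have e1 : Real.exp (-(25/8 * c)) ≤ Real.exp (-c) * Real.exp (-(17/8 : ℝ)) := by
        rw [← Real.exp_add]
        apply Real.exp_le_exp.mpr
        nlinarith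
      have e2 : Real.exp (-((5 - 5 * Real.log 2) * c))
          ≤ Real.exp (-c) * (32 * Real.exp (-(4:ℝ))) := by
        have h32 : Real.exp (5 * Real.log 2) = 32 := by
          rw [show (5:ℝ) * Real.log 2 = ((5:ℕ):ℝ) * Real.log 2 by norm_num,
            Real.exp_nat_mul, Real.exp_log two_pos]
          norm_num
        have : Real.exp (-c) * (32 * Real.exp (-(4:ℝ)))
            = Real.exp (-c + 5 * Real.log 2 + -(4:ℝ)) := by
          rw [Real.exp_add, Real.exp_add, h32]
          ring
        rw [this]
        apply Real.exp_le_exp.mpr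
        nlinarith
      have e3 : 32 * Real.exp (-(4:ℝ)) + 2 * Real.exp (-(17/8:ℝ)) ≤ 1 := by
        have h4 : Real.exp (4:ℝ) = Real.exp 1 ^ 4 := by
          rw [show (4:ℝ) = ((4:ℕ):ℝ) * 1 by norm_num, Real.exp_nat_mul]
        have h178 : Real.exp (-(17/8:ℝ)) ≤ Real.exp (-(2:ℝ)) :=
          Real.exp_le_exp.mpr (by norm_num)
        have h2e : Real.exp (2:ℝ) = Real.exp 1 ^ 2 := by
          rw [show (2:ℝ) = ((2:ℕ):ℝ) * 1 by norm_num, Real.exp_nat_mul]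
        have h2p : (7.29:ℝ) ≤ Real.exp 1 ^ 2 := by nlinarith [he1]
        have hpow4 : (53.1441:ℝ) ≤ Real.exp 1 ^ 4 := by nlinarith [h2p, he1]
        have hb4 : Real.exp (-(4:ℝ)) ≤ 1 / 53.1441 := by
          calc Real.exp (-(4:ℝ)) = (Real.exp 1 ^ 4)⁻¹ := by rw [Real.exp_neg, h4]
            _ ≤ (53.1441:ℝ)⁻¹ := inv_anti₀ (by norm_num) hpow4
            _ ≤ 1 / 53.1441 := by norm_num
        have hb2 : Real.exp (-(2:ℝ)) ≤ 1 / 7.29 := by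
          calc Real.exp (-(2:ℝ)) = (Real.exp 1 ^ 2)⁻¹ := by rw [Real.exp_neg, h2e]
            _ ≤ (7.29:ℝ)⁻¹ := inv_anti₀ (by norm_num) h2p
            _ ≤ 1 / 7.29 := by norm_num
        nlinarith [h178, hb4, hb2]
      have hpos := Real.exp_pos (-c)
      calc Real.exp (-((5 - 5 * Real.log 2) * c)) + 2 * Real.exp (-(25/8 * c))
          ≤ Real.exp (-c) * (32 * Real.exp (-(4:ℝ)))
            + 2 * (Real.exp (-c) * Real.exp (-(17/8:ℝ))) := by linarith [e1, e2]
        _ = Real.exp (-c) * (32 * Real.exp (-(4:ℝ)) + 2 * Real.exp (-(17/8:ℝ))) := by ring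
        _ ≤ Real.exp (-c) * 1 := mul_le_mul_of_nonneg_left e3 hpos.le
        _ = Real.exp (-c) := mul_one _
    calc sampleProb m p (fun R =>
        ¬ (|(if R = ∅ then (1:ℝ)/2 else (∑ i ∈ R, γ i) / (R.card : ℝ)) - gbar| ≤ η))
        ≤ _ := hmono
      _ ≤ _ := hor1
      _ ≤ Real.exp (-((5 - 5 * Real.log 2) * c)) + (Real.exp (-(25/8 * c)) + Real.exp (-(25/8 * c))) :=
          add_le_add hcount (le_trans hor2 (add_le_add hdev1 hdev2))
      _ ≤ Real.exp (-c) := by linarith [hfin]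
  have hcompl := sampleProb_compl m p (fun R =>
    |(if R = ∅ then (1:ℝ)/2 else (∑ i ∈ R, γ i) / (R.card : ℝ)) - gbar| ≤ η)
  have : sampleProb m p (fun U =>
      |(if U = ∅ then (1:ℝ)/2 else (∑ i ∈ U, γ i) / (U.card : ℝ)) - gbar| ≤ η)
      = 1 - sampleProb m p (fun R =>
      ¬ (|(if R = ∅ then (1:ℝ)/2 else (∑ i ∈ R, γ i) / (R.card : ℝ)) - gbar| ≤ η)) := by
    linarith [hcompl]
  rw [this]
  linarith [hbad]
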